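/- Let H be the Hecke algebra of a Coxeter system with the standard quadratic relation (t_i+q^{-1})(t_i−q)=0 over Z[q,q^{-1}], and let the bar involution be the ring homomorphism with q̄ = q^{-1} and t̄_i = t_i^{-1}. Then for a finite parabolic subgroup W_f with longest element of length ν_f, the element ρ_f = Σ_{w∈W_f} q^{ℓ(w)} t_w satisfies ρ̄_f = q^{-2ν_f} ρ_f. -/

import Mathlib

/-!
Statement 1: In the Hecke algebra of a Coxeter system over `ℤ[q,q⁻¹]` with
quadratic relation `(tᵢ + q⁻¹)(tᵢ − q) = 0` and bar involution (`q̄ = q⁻¹`,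
`t̄_w = t_{w⁻¹}⁻¹`), for a finite parabolic subgroup `W_f` with longest element
of length `ν_f`, the element `ρ_f = Σ_{w ∈ W_f} q^{ℓ(w)} t_w` satisfies
`ρ̄_f = q^{−2ν_f} ρ_f`.
-/

open LaurentPolynomial

noncomputable section

abbrev HeckeBase := LaurentPolynomial ℤ

namespace HeckeStmtAux

open List CoxeterSystem

private lemma conj_eq_iff {W : Type*} [Group W] (a x y : W) :
    a⁻¹ * x * a = y ↔ x = a * y * a⁻¹ := by
  constructor
  · rintro rfl; group
  · rintro rfl; group

/-- The auxiliary group used to define the parity cocycle of a Coxeter system. -/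
structure C (W : Type*) where
  f : W → ZMod 2
  u : W

namespace C

variable {W : Type*} [Group W]

instance : Mul (C W) := ⟨fun a b => ⟨fun t => a.f t + b.f (a.u⁻¹ * t * a.u), a.u * b.u⟩⟩
instance : One (C W) := ⟨⟨fun _ => 0, 1⟩⟩
instance : Inv (C W) := ⟨fun a => ⟨fun t => a.f (a.u * t * a.u⁻¹), a.u⁻¹⟩⟩

theorem mul_f (a b : C W) (t : W) : (a * b).f t = a.f t + b.f (a.u⁻¹ * t * a.u) := rfl
theorem mul_u (a b : C W) : (a * b).u = a.u * b.u := rfl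
theorem one_f (t : W) : (1 : C W).f t = 0 := rfl
theorem one_u : (1 : C W).u = 1 := rfl

omit [Group W] in
@[ext] theorem ext {a b : C W} (hf : a.f = b.f) (hu : a.u = b.u) : a = b := by
  cases a; cases b; simp_all

instance : Group (C W) where
  mul_assoc a b c := by
    refine ext (funext fun t => ?_) ?_
    · rw [mul_f, mul_f, mul_f, mul_f, add_assoc]
      congr 2
      rw [mul_u, mul_inv_rev]
      simp [mul_assoc]
    · rw [mul_u, mul_u, mul_u, mul_u, mul_assoc]
  one_mul a := by
    refine ext (funext fun t => ?_) ?_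
    · rw [mul_f, one_f, one_u, zero_add, inv_one, one_mul, mul_one]
    · rw [mul_u, one_u, one_mul]
  mul_one a := by
    refine ext (funext fun t => ?_) ?_
    · rw [mul_f, one_f, add_zero]
    · rw [mul_u, one_u, mul_one]
  inv_mul_cancel a := by
    refine ext (funext fun t => ?_) ?_
    · show a.f (a.u * t * a.u⁻¹) + a.f ((a.u⁻¹)⁻¹ * t * a.u⁻¹) = 0
      rw [inv_inv]
      exact CharTwo.add_self_eq_zero _
    · show a.u⁻¹ * a.u = 1; simp

theorem pow_u (a : C W) (n : ℕ) : (a ^ n).u = a.u ^ n := by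
  induction n with
  | zero => rw [pow_zero, pow_zero, one_u]
  | succ n ih => rw [pow_succ, mul_u, ih, pow_succ]

theorem pow_f (a : C W) (n : ℕ) (t : W) :
    (a ^ n).f t = ∑ k ∈ Finset.range n, a.f ((a.u)⁻¹ ^ k * t * a.u ^ k) := by
  induction n generalizing t with
  | zero => rw [pow_zero, Finset.range_zero, Finset.sum_empty, one_f]
  | succ n ih =>
    rw [pow_succ', mul_f, ih, Finset.sum_range_succ', add_comm]
    congr 1
    · refine Finset.sum_congr rfl fun k _ => ?_
      congr 1
      rw [pow_succ, pow_succ']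
      simp [mul_assoc]
    · simp

end C

variable {B W : Type*} [Group W] {M : CoxeterMatrix B} (cs : CoxeterSystem M W)

local prefix:100 "ss" => cs.simple
local prefix:100 "π" => cs.wordProd
local prefix:100 "ℓ" => cs.length

open scoped Classical in
/-- The generators of the parity cocycle. -/
def mu (i : B) : C W := ⟨fun t => if t = ss i then 1 else 0, ss i⟩

private lemma sum_double {α : Type*} [AddCommMonoid α] (g : ℕ → α) (m : ℕ) :
    ∑ k ∈ Finset.range m, (g (2 * k) + g (2 * k + 1)) = ∑ j ∈ Finset.range (2 * m), g j := by
  induction m with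
  | zero => simp
  | succ m ih =>
    rw [Finset.sum_range_succ, ih]
    rw [show 2 * (m+1) = (2 * m + 1) + 1 by ring, Finset.sum_range_succ, Finset.sum_range_succ]
    rw [add_assoc]

open scoped Classical in
theorem mu_liftable : M.IsLiftable (mu cs) := by
  intro i j
  set m := M i j with hm
  set si := ss i with hsi
  set sj := ss j with hsj
  set u : W := si * sj with hu
  have hum : u ^ m = 1 := cs.simple_mul_simple_pow i j
  have hss : si * si = 1 := cs.simple_mul_simple_self i
  have hsiinv : si⁻¹ = si := cs.inv_simple i
  have hsjinv : sj⁻¹ = sj := cs.inv_simple j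
  have huinv : u⁻¹ = sj * si := by rw [hu, mul_inv_rev, hsiinv, hsjinv]
  have base : u * si = si * u⁻¹ := by rw [huinv, hu, mul_assoc]
  have husi : ∀ k : ℕ, u ^ k * si = si * (u⁻¹) ^ k := by
    intro k
    induction k with
    | zero => simp
    | succ k ih =>
      rw [pow_succ, mul_assoc, base, ← mul_assoc, ih, mul_assoc, ← pow_succ]
  refine C.ext (funext fun t => ?_) ?_
  swap
  · rw [C.pow_u, C.one_u]
    exact hum
  · rw [C.one_f, C.pow_f]
    have hmu : (mu cs i * mu cs j).u = u := rfl
    have hmf : ∀ x, (mu cs i * mu cs j).f x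
        = (if x = si then 1 else 0) + (if x = si * sj * si then (1 : ZMod 2) else 0) := by
      intro x
      rw [C.mul_f]
      show (if x = si then (1:ZMod 2) else 0) + (if si⁻¹ * x * si = sj then 1 else 0) = _
      congr 2
      rw [conj_eq_iff, hsiinv]
    simp only [hmu, hmf]
    have hconj : ∀ (k : ℕ) (x : W), ((u⁻¹) ^ k * t * u ^ k = x) ↔ (t = u ^ k * x * (u⁻¹) ^ k) := by
      intro k x
      rw [inv_pow, conj_eq_iff, ← inv_pow]
    have e1 : ∀ k : ℕ, u ^ k * si * (u⁻¹) ^ k = si * (u⁻¹) ^ (2 * k) := by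
      intro k
      rw [husi k, mul_assoc, ← pow_add, two_mul]
    have e2 : ∀ k : ℕ, u ^ k * (si * sj * si) * (u⁻¹) ^ k = si * (u⁻¹) ^ (2 * k + 1) := by
      intro k
      have h1 : si * sj * si = si * u⁻¹ := by rw [huinv, mul_assoc]
      rw [h1, ← mul_assoc, husi k, mul_assoc, mul_assoc, ← pow_succ', ← pow_add]
      congr 2
      ring
    have step : ∀ k ∈ Finset.range m,
        ((if (u⁻¹) ^ k * t * u ^ k = si then (1 : ZMod 2) else 0)
          + (if (u⁻¹) ^ k * t * u ^ k = si * sj * si then 1 else 0))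
        = ((if t = si * (u⁻¹) ^ (2 * k) then 1 else 0)
          + (if t = si * (u⁻¹) ^ (2 * k + 1) then 1 else 0)) := by
      intro k _
      congr 1
      · rw [hconj, e1]
      · rw [hconj, e2]
    rw [Finset.sum_congr rfl step]
    rw [sum_double (fun j => if t = si * (u⁻¹) ^ j then (1 : ZMod 2) else 0) m]
    rw [two_mul, Finset.sum_range_add]
    have hper : ∀ j ∈ Finset.range m,
        (if t = si * (u⁻¹) ^ (m + j) then (1 : ZMod 2) else 0)
        = (if t = si * (u⁻¹) ^ j then 1 else 0) := by
      intro j _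
      rw [pow_add, inv_pow, hum, inv_one, one_mul]
    rw [Finset.sum_congr rfl hper]
    exact CharTwo.add_self_eq_zero _

/-- The parity cocycle. -/
def phi : W →* C W := cs.lift ⟨mu cs, mu_liftable cs⟩

/-- The projection `C W →* W`. -/
def uHom : C W →* W where
  toFun := C.u
  map_one' := rfl
  map_mul' := C.mul_u

theorem phi_u (w : W) : (phi cs w).u = w := by
  have h : (uHom.comp (phi cs)) = MonoidHom.id W := by
    refine cs.ext_simple fun i => ?_
    show ((phi cs) (ss i)).u = ss i
    unfold phi
    rw [cs.lift_apply_simple]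
    rfl
  exact DFunLike.congr_fun h w

/-- `eta cs w t = 1` iff `t` is a left inversion of `w`. -/
def eta (w : W) : W → ZMod 2 := (phi cs w).f

theorem eta_mul (a b : W) (t : W) :
    eta cs (a * b) t = eta cs a t + eta cs b (a⁻¹ * t * a) := by
  unfold eta
  rw [map_mul, C.mul_f, phi_u]

theorem eta_one (t : W) : eta cs 1 t = 0 := by
  unfold eta; rw [map_one]; rfl

open scoped Classical in
theorem eta_simple (i : B) (t : W) : eta cs (ss i) t = if t = ss i then 1 else 0 := by
  unfold eta phi
  rw [cs.lift_apply_simple]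
  rfl

theorem eta_inv (a t : W) : eta cs a⁻¹ t = eta cs a (a * t * a⁻¹) := by
  have h0 : eta cs (a * a⁻¹) (a * t * a⁻¹) = 0 := by rw [mul_inv_cancel, eta_one]
  rw [eta_mul] at h0
  have harg : a⁻¹ * (a * t * a⁻¹) * a = t := by group
  rw [harg] at h0
  have h1 := add_eq_zero_iff_eq_neg.mp h0
  rw [CharTwo.neg_eq] at h1
  exact h1.symm

theorem lt_of_eta_eq_one : ∀ n : ℕ, ∀ w t : W, ℓ w = n → eta cs w t = 1 → ℓ (t * w) < ℓ w := by
  intro n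
  induction n using Nat.strong_induction_on with
  | _ n ih =>
    intro w t hlw het
    have hw1 : w ≠ 1 := by
      rintro rfl
      rw [eta_one] at het
      exact one_ne_zero het.symm
    obtain ⟨i, hi⟩ := cs.exists_leftDescent_of_ne_one hw1
    set w' := ss i * w with hw'
    have hww' : w = ss i * w' := by rw [hw', ← mul_assoc, cs.simple_mul_simple_self, one_mul]
    have hlw' : ℓ w' + 1 = ℓ w := by
      rcases cs.length_simple_mul w i with h | h
      · exact absurd h.ge (by exact absurd hi (by simp [CoxeterSystem.IsLeftDescent, h])) 
      · exact h
    classical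
    by_cases hts : t = ss i
    · subst hts
      have h3 : ss i * w = w' := hw'.symm
      rw [h3]
      omega
    · -- t ≠ s i
      have heta' : eta cs w' (ss i * t * ss i) = 1 := by
        have := eta_mul cs (ss i) w' t
        rw [← hww', eta_simple, if_neg hts, zero_add, cs.inv_simple] at this
        rw [← this, het]
      have hlt' : ℓ ((ss i * t * ss i) * w') < ℓ w' := ih (ℓ w') (by omega) w' _ rfl heta'
      have harg : t * w = ss i * ((ss i * t * ss i) * w') := by
        rw [hww']
        have h2 : ss i * ss i = 1 := cs.simple_mul_simple_self i
        calc t * (ss i * w') = (ss i * ss i) * t * (ss i * w') := by rw [h2]; group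
        _ = ss i * (ss i * t * ss i * w') := by group
      have : ℓ (t * w) ≤ ℓ ((ss i * t * ss i) * w') + 1 := by
        rw [harg]
        have := cs.length_mul_le (ss i) ((ss i * t * ss i) * w')
        rw [cs.length_simple] at this
        omega
      omega

theorem zmod2_cases (x : ZMod 2) : x = 0 ∨ x = 1 := by revert x; decide

theorem eta_refl {t : W} (ht : cs.IsReflection t) : eta cs t t = 1 := by
  obtain ⟨u, i, rfl⟩ := ht
  have harg1 : u⁻¹ * (u * ss i * u⁻¹) * u = ss i := by group
  have harg2 : (ss i)⁻¹ * ss i * ss i = ss i := by rw [inv_mul_cancel, one_mul]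
  have harg3 : u * ss i * u⁻¹ = u * (ss i * u⁻¹) := mul_assoc u (ss i) u⁻¹
  calc eta cs (u * ss i * u⁻¹) (u * ss i * u⁻¹)
      = eta cs u (u * ss i * u⁻¹) + eta cs (ss i * u⁻¹) (ss i) := by
        nth_rewrite 1 [harg3]
        rw [eta_mul, harg1]
    _ = eta cs u (u * ss i * u⁻¹)
        + (eta cs (ss i) (ss i) + eta cs u⁻¹ ((ss i)⁻¹ * ss i * ss i)) := by rw [eta_mul]
    _ = eta cs u (u * ss i * u⁻¹) + (1 + eta cs u⁻¹ (ss i)) := by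
        rw [harg2, eta_simple, if_pos rfl]
    _ = eta cs u (u * ss i * u⁻¹) + (1 + eta cs u (u * ss i * u⁻¹)) := by rw [eta_inv]
    _ = 1 := by
        rcases zmod2_cases (eta cs u (u * ss i * u⁻¹)) with h | h <;> rw [h] <;> decide

theorem eta_eq_one_of_lt {t w : W} (ht : cs.IsReflection t) (hlt : ℓ (t * w) < ℓ w) :
    eta cs w t = 1 := by
  rcases zmod2_cases (eta cs w t) with h0 | h1
  swap
  · exact h1
  exfalso
  have hflip : eta cs (t * w) t = 1 := by
    rw [eta_mul]
    have harg : t⁻¹ * t * t = t := by group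
    rw [harg, eta_refl cs ht, h0, add_zero]
  have := lt_of_eta_eq_one cs (ℓ (t * w)) (t * w) t rfl hflip
  rw [← mul_assoc, ht.mul_self, one_mul] at this
  omega

/-- The key splitting lemma: concatenation of length-additive factorizations. -/
theorem length_helper {a b : W} (i : B) (hab : ℓ (a * b) = ℓ a + ℓ b)
    (ha : ℓ (a * ss i) = ℓ a + 1) (hb : ℓ (ss i * b) = ℓ b + 1) :
    ℓ (a * ss i * b) = ℓ a + ℓ b + 1 := by
  set t := a * ss i * a⁻¹ with hts
  have ht : cs.IsReflection t := ⟨a, i, rfl⟩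
  have key : a * ss i * b = t * (a * b) := by rw [hts]; group
  have hne : ℓ (t * (a * b)) ≠ ℓ (a * b) := ht.length_mul_right_ne (a * b)
  have hnlt : ¬ ℓ (t * (a * b)) < ℓ (a * b) := by
    intro hlt
    have h1 : eta cs (a * b) t = 1 := eta_eq_one_of_lt cs ht hlt
    rw [eta_mul] at h1
    rcases zmod2_cases (eta cs a t) with h2 | h2
    · -- then eta b (a⁻¹ t a) = 1
      have harg : a⁻¹ * t * a = ss i := by rw [hts]; group
      rw [h2, zero_add, harg] at h1
      have := lt_of_eta_eq_one cs (ℓ b) b (ss i) rfl h1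
      omega
    · have := lt_of_eta_eq_one cs (ℓ a) a t rfl h2
      have h3 : t * a = a * ss i := by rw [hts]; group
      rw [h3] at this
      omega
  have hgt : ℓ (a * b) < ℓ (t * (a * b)) := by
    rcases Nat.lt_or_ge (ℓ (t * (a * b))) (ℓ (a * b)) with h | h
    · exact absurd h hnlt
    · exact lt_of_le_of_ne h (Ne.symm hne)
  have hub : ℓ (a * ss i * b) ≤ ℓ a + ℓ b + 1 := by
    have h1 := cs.length_mul_le (a * ss i) b
    have h2 := cs.length_mul_le a (ss i)
    rw [cs.length_simple] at h2
    omega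
  rw [key] at hub ⊢
  omega

section Parabolic

open scoped Classical

theorem eta_count (ω : List B) (t : W) :
    eta cs (π ω) t = ((cs.leftInvSeq ω).count t : ZMod 2) := by
  induction ω generalizing t with
  | nil =>
    rw [cs.wordProd_nil, eta_one, CoxeterSystem.leftInvSeq_nil, List.count_nil, Nat.cast_zero]
  | cons i ω ih =>
    rw [cs.wordProd_cons, eta_mul, eta_simple]
    have hlis : cs.leftInvSeq (i :: ω)
        = ss i :: List.map (⇑(MulAut.conj (ss i))) (cs.leftInvSeq ω) := rfl
    rw [hlis, List.count_cons]
    have hx : (MulAut.conj (ss i)) ((ss i)⁻¹ * t * (ss i)) = t := by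
      simp only [MulAut.conj_apply]
      group
    have hcm : (List.map (⇑(MulAut.conj (ss i))) (cs.leftInvSeq ω)).count t
        = (cs.leftInvSeq ω).count ((ss i)⁻¹ * t * ss i) := by
      conv_lhs => rw [← hx]
      exact List.count_map_of_injective _ _ (MulEquiv.injective _) _
    rw [hcm, ih, Nat.cast_add]
    rw [add_comm]
    congr 1
    by_cases h : t = ss i
    · simp [h]
    · simp [h, Ne.symm h]

theorem exists_eraseIdx_of_eta (ω : List B) (t : W) (h : eta cs (π ω) t = 1) :
    ∃ j, j < ω.length ∧ π (ω.eraseIdx j) = t * π ω := by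
  have hc : (cs.leftInvSeq ω).count t ≠ 0 := by
    intro h0
    rw [eta_count, h0, Nat.cast_zero] at h
    exact zero_ne_one h
  have hmem : t ∈ cs.leftInvSeq ω := by
    by_contra hnm
    exact hc (List.count_eq_zero_of_not_mem hnm)
  obtain ⟨⟨j, hj⟩, hget⟩ := List.mem_iff_get.mp hmem
  have hjlen : j < ω.length := by
    have := cs.length_leftInvSeq ω
    omega
  refine ⟨j, hjlen, ?_⟩
  have hgetD : (cs.leftInvSeq ω).getD j 1 = t := by
    rw [List.get_eq_getElem] at hget
    rw [List.getD_eq_getElem _ _ hj, hget]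
  rw [← cs.getD_leftInvSeq_mul_wordProd ω j, hgetD]

variable (J : Set B)

theorem exists_reduced_Jword :
    ∀ ω : List B, (∀ i ∈ ω, i ∈ J) →
      ∃ α : List B, (∀ i ∈ α, i ∈ J) ∧ α.length = ℓ (π ω) ∧ π α = π ω := by
  intro ω
  induction ω with
  | nil => exact fun _ => ⟨[], by simp, by simp, rfl⟩
  | cons i ω ih =>
    intro hJ
    obtain ⟨α, hαJ, hαlen, hαprod⟩ := ih (fun j hj => hJ j (List.mem_cons_of_mem i hj))
    have hiJ : i ∈ J := hJ i List.mem_cons_self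
    rcases cs.length_simple_mul (π ω) i with h | h
    · refine ⟨i :: α, ?_, ?_, ?_⟩
      · intro j hj
        rcases List.mem_cons.mp hj with rfl | hj
        · exact hiJ
        · exact hαJ j hj
      · rw [cs.wordProd_cons, h, List.length_cons, hαlen]
      · rw [cs.wordProd_cons, cs.wordProd_cons, hαprod]
    · have hlt : ℓ (ss i * π ω) < ℓ (π ω) := by omega
      have heta : eta cs (π α) (ss i) = 1 := by
        rw [hαprod]
        exact eta_eq_one_of_lt cs (cs.isReflection_simple i) hlt
      obtain ⟨j, hj, hje⟩ := exists_eraseIdx_of_eta cs α (ss i) heta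
      refine ⟨α.eraseIdx j, ?_, ?_, ?_⟩
      · intro k hk
        exact hαJ k (List.eraseIdx_sublist α j |>.mem hk)
      · rw [cs.wordProd_cons]
        have hle := List.length_eraseIdx_add_one hj
        omega
      · rw [hje, hαprod, cs.wordProd_cons]

theorem Jword_mem_closure :
    ∀ ω : List B, (∀ i ∈ ω, i ∈ J) → π ω ∈ Subgroup.closure (cs.simple '' J) := by
  intro ω
  induction ω with
  | nil => intro _; rw [cs.wordProd_nil]; exact one_mem _
  | cons i ω ih =>
    intro hJ
    rw [cs.wordProd_cons]
    exact mul_mem (Subgroup.subset_closure ⟨i, hJ i List.mem_cons_self, rfl⟩)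
      (ih fun j hj => hJ j (List.mem_cons_of_mem i hj))

theorem exists_Jword_of_mem {w : W} (hw : w ∈ Subgroup.closure (cs.simple '' J)) :
    ∃ ω : List B, (∀ i ∈ ω, i ∈ J) ∧ π ω = w := by
  induction hw using Subgroup.closure_induction with
  | mem x hx =>
    obtain ⟨i, hi, rfl⟩ := hx
    exact ⟨[i], by simpa using hi, cs.wordProd_singleton i⟩
  | one => exact ⟨[], by simp, cs.wordProd_nil⟩
  | mul x y hx hy ihx ihy =>
    obtain ⟨ω₁, h1, rfl⟩ := ihx
    obtain ⟨ω₂, h2, rfl⟩ := ihy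
    refine ⟨ω₁ ++ ω₂, ?_, cs.wordProd_append ω₁ ω₂⟩
    intro j hj
    rcases List.mem_append.mp hj with h | h
    · exact h1 j h
    · exact h2 j h
  | inv x hx ihx =>
    obtain ⟨ω, h1, rfl⟩ := ihx
    refine ⟨ω.reverse, ?_, cs.wordProd_reverse ω⟩
    intro j hj
    exact h1 j (List.mem_reverse.mp hj)

theorem exists_reduced_Jword_of_mem {w : W} (hw : w ∈ Subgroup.closure (cs.simple '' J)) :
    ∃ α : List B, (∀ i ∈ α, i ∈ J) ∧ α.length = ℓ w ∧ π α = w := by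
  obtain ⟨ω, hωJ, rfl⟩ := exists_Jword_of_mem cs J hw
  exact exists_reduced_Jword cs J ω hωJ

/-- Decompose a nontrivial element of a standard parabolic subgroup as `v' * s i` with
`i ∈ J`, `v'` in the subgroup and `ℓ v' + 1 = ℓ v`. -/
theorem exists_decomp {v : W} (hv : v ∈ Subgroup.closure (cs.simple '' J)) (hne : v ≠ 1) :
    ∃ (v' : W) (i : B), i ∈ J ∧ v' ∈ Subgroup.closure (cs.simple '' J) ∧
      v = v' * ss i ∧ ℓ v' + 1 = ℓ v := by
  obtain ⟨α, hαJ, hαlen, hαprod⟩ := exists_reduced_Jword_of_mem cs J hv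
  have hαne : α ≠ [] := by
    rintro rfl
    rw [← hαprod, cs.wordProd_nil] at hne
    exact hne rfl
  set i := α.getLast hαne with hi
  set β := α.dropLast with hβ
  have hsplit : β ++ [i] = α := List.dropLast_append_getLast hαne
  have hprod : v = π β * ss i := by
    rw [← hαprod, ← hsplit, cs.wordProd_append, cs.wordProd_singleton]
  have hβlen : β.length + 1 = α.length := by
    rw [← hsplit, List.length_append, List.length_singleton]
  have hβJ : ∀ j ∈ β, j ∈ J := fun j hj => hαJ j (List.dropLast_sublist α |>.mem hj)
  have hℓβ : ℓ (π β) + 1 = ℓ v := by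
    have h1 : ℓ (π β) ≤ β.length := cs.length_wordProd_le β
    have h2 : ℓ v ≤ ℓ (π β) + 1 := by
      rw [hprod]
      have := cs.length_mul_le (π β) (ss i)
      rw [cs.length_simple] at this
      omega
    omega
  exact ⟨π β, i, hαJ i (List.getLast_mem hαne), Jword_mem_closure cs J β hβJ, hprod, hℓβ⟩

/-- Length-complement property of a maximal-length element of a standard parabolic subgroup. -/
theorem length_complement {m : W} (hm : m ∈ Subgroup.closure (cs.simple '' J))
    (hmax : ∀ w ∈ Subgroup.closure (cs.simple '' J), ℓ w ≤ ℓ m) :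
    ∀ (n : ℕ) (v : W), v ∈ Subgroup.closure (cs.simple '' J) → ℓ v = n →
      ℓ v + ℓ (v⁻¹ * m) = ℓ m := by
  intro n
  induction n using Nat.strong_induction_on with
  | _ n ih =>
    intro v hv hlv
    rcases eq_or_ne v 1 with rfl | hne
    · simp
    obtain ⟨v', i, hiJ, hv', hdec, hlv'⟩ := exists_decomp cs J hv hne
    set x := v'⁻¹ * m with hx
    have hIH : ℓ v' + ℓ x = ℓ m := ih (ℓ v') (by omega) v' hv' rfl
    have hvm : v⁻¹ * m = ss i * x := by
      rw [hdec, mul_inv_rev, cs.inv_simple, mul_assoc, hx]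
    rcases cs.length_simple_mul x i with h | h
    · exfalso
      have hab : ℓ (v' * x) = ℓ v' + ℓ x := by
        have hvx : v' * x = m := by rw [hx, ← mul_assoc, mul_inv_cancel, one_mul]
        rw [hvx]
        omega
      have ha : ℓ (v' * ss i) = ℓ v' + 1 := by rw [← hdec]; omega
      have hhelp := length_helper cs i hab ha h
      have hmem : v' * ss i * x ∈ Subgroup.closure (cs.simple '' J) := by
        rw [← hdec]
        exact mul_mem hv (by rw [hx]; exact mul_mem (inv_mem hv') hm)
      have := hmax _ hmem
      omega
    · rw [hvm]
      have hne0 : ℓ x ≠ 0 := by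
        intro h0
        have := cs.length_simple_mul_ne x i
        omega
      omega

end Parabolic

section Algebra

variable {H : Type*} [Ring H] [Algebra (LaurentPolynomial ℤ) H]

local notation "Q" n => algebraMap (LaurentPolynomial ℤ) H (T n)

lemma Qmul (a b : ℤ) : (Q a) * (Q b) = Q (a + b) := by
  rw [← map_mul, ← T_add]

lemma Qzero : (Q (0:ℤ)) = 1 := by
  rw [T_zero, map_one]

lemma tsq (t : W → H)
    (hquad : ∀ i : B, (t (cs.simple i) + Q (-1:ℤ)) * (t (cs.simple i) - Q (1:ℤ)) = 0)
    (i : B) :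
    t (ss i) * t (ss i) = 1 + (Q (1:ℤ)) * t (ss i) - (Q (-1:ℤ)) * t (ss i) := by
  have h := hquad i
  have hexp : (t (ss i) + (Q (-1:ℤ))) * (t (ss i) - (Q (1:ℤ)))
      = t (ss i) * t (ss i) - t (ss i) * (Q (1:ℤ)) + (Q (-1:ℤ)) * t (ss i)
        - (Q (-1:ℤ)) * (Q (1:ℤ)) := by
    noncomm_ring
  rw [hexp] at h
  have h2 : (Q (-1:ℤ)) * (Q (1:ℤ)) = 1 := by
    rw [Qmul]
    norm_num [Qzero]
  have h3 : t (ss i) * (Q (1:ℤ)) = (Q (1:ℤ)) * t (ss i) := (Algebra.commutes _ _).symm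
  rw [h2, h3] at h
  calc t (ss i) * t (ss i)
      = (t (ss i) * t (ss i) - (Q (1:ℤ)) * t (ss i) + (Q (-1:ℤ)) * t (ss i) - 1)
        + (1 + (Q (1:ℤ)) * t (ss i) - (Q (-1:ℤ)) * t (ss i)) := by noncomm_ring
    _ = 1 + (Q (1:ℤ)) * t (ss i) - (Q (-1:ℤ)) * t (ss i) := by rw [h, zero_add]

lemma pair_eq (t : W → H)
    (hlen : ∀ v w : W, ℓ (v * w) = ℓ v + ℓ w → t v * t w = t (v * w))
    (hquad : ∀ i : B, (t (cs.simple i) + Q (-1:ℤ)) * (t (cs.simple i) - Q (1:ℤ)) = 0)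
    (i : B) (w : W) (hw : ℓ (w * ss i) = ℓ w + 1) :
    ((Q ((ℓ w : ℤ))) * t w) * t (ss i) + ((Q ((ℓ (w * ss i) : ℤ))) * t (w * ss i)) * t (ss i)
    = (Q (1:ℤ)) * ((Q ((ℓ w : ℤ))) * t w)
      + (Q (1:ℤ)) * ((Q ((ℓ (w * ss i) : ℤ))) * t (w * ss i)) := by
  have hcast : ((ℓ (w * ss i) : ℕ) : ℤ) = (ℓ w : ℤ) + 1 := by omega
  set n := ((ℓ w : ℕ) : ℤ) with hn
  have hXY : t w * t (ss i) = t (w * ss i) := by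
    refine hlen w (ss i) ?_
    rw [cs.length_simple]
    exact hw
  have hYs : t (w * ss i) * t (ss i)
      = t w + (Q (1:ℤ)) * t (w * ss i) - (Q (-1:ℤ)) * t (w * ss i) := by
    calc t (w * ss i) * t (ss i) = (t w * t (ss i)) * t (ss i) := by rw [hXY]
      _ = t w * (t (ss i) * t (ss i)) := by rw [mul_assoc]
      _ = t w * (1 + (Q (1:ℤ)) * t (ss i) - (Q (-1:ℤ)) * t (ss i)) := by
          rw [tsq cs t hquad i]
      _ = t w + t w * ((Q (1:ℤ)) * t (ss i)) - t w * ((Q (-1:ℤ)) * t (ss i)) := by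
          rw [mul_sub, mul_add, mul_one]
      _ = t w + (Q (1:ℤ)) * (t w * t (ss i)) - (Q (-1:ℤ)) * (t w * t (ss i)) := by
          rw [← mul_assoc, ← Algebra.commutes (T (1:ℤ)) (t w), mul_assoc,
              ← mul_assoc (t w), ← Algebra.commutes (T (-1:ℤ)) (t w), mul_assoc]
      _ = t w + (Q (1:ℤ)) * t (w * ss i) - (Q (-1:ℤ)) * t (w * ss i) := by rw [hXY]
  rw [hcast]
  calc ((Q n) * t w) * t (ss i) + ((Q (n+1)) * t (w * ss i)) * t (ss i)
      = (Q n) * (t w * t (ss i)) + (Q (n+1)) * (t (w * ss i) * t (ss i)) := by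
        rw [mul_assoc, mul_assoc]
    _ = (Q n) * t (w * ss i)
        + (Q (n+1)) * (t w + (Q (1:ℤ)) * t (w * ss i) - (Q (-1:ℤ)) * t (w * ss i)) := by
        rw [hXY, hYs]
    _ = (Q n) * t (w * ss i) + ((Q (n+1)) * t w
        + ((Q (n+1)) * ((Q (1:ℤ)) * t (w * ss i))
          - (Q (n+1)) * ((Q (-1:ℤ)) * t (w * ss i)))) := by
        rw [mul_sub, mul_add]
        noncomm_ring
    _ = (Q n) * t (w * ss i) + ((Q (n+1)) * t w
        + ((Q (n+2)) * t (w * ss i) - (Q n) * t (w * ss i))) := by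
        rw [← mul_assoc, ← mul_assoc, Qmul, Qmul]
        have e3 : n + 1 + 1 = n + 2 := by ring
        have e4 : n + 1 + (-1) = n := by ring
        rw [e3, e4]
    _ = (Q (n+1)) * t w + (Q (n+2)) * t (w * ss i) := by abel
    _ = (Q (1:ℤ)) * ((Q n) * t w) + (Q (1:ℤ)) * ((Q (n+1)) * t (w * ss i)) := by
        rw [← mul_assoc, ← mul_assoc, Qmul, Qmul]
        have e1 : (1:ℤ) + n = n + 1 := by ring
        have e2 : (1:ℤ) + (n + 1) = n + 2 := by ring
        rw [e1, e2]

end Algebra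

end HeckeStmtAux

theorem stmt1 {B W H : Type*} [Group W] [Ring H] [Algebra HeckeBase H]
    {M : CoxeterMatrix B} (cs : CoxeterSystem M W)
    (t : W → H)
    (ht1 : t 1 = 1)
    (hlen : ∀ v w : W, cs.length (v * w) = cs.length v + cs.length w →
      t v * t w = t (v * w))
    (hquad : ∀ i : B, (t (cs.simple i) + algebraMap HeckeBase H (T (-1))) *
      (t (cs.simple i) - algebraMap HeckeBase H (T 1)) = 0)
    -- the bar involution: a ring homomorphism with `q̄ = q⁻¹` and `t̄_w = (t_{w⁻¹})⁻¹`
    (bar : H →+* H)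
    (hbarq : ∀ n : ℤ, bar (algebraMap HeckeBase H (T n)) = algebraMap HeckeBase H (T (-n)))
    (hbart : ∀ w : W, bar (t w) * t w⁻¹ = 1 ∧ t w⁻¹ * bar (t w) = 1)
    -- `W_f`: a finite parabolic subgroup generated by simple reflections indexed by `J`
    (J : Set B) (Wf : Subgroup W)
    (hWf : Wf = Subgroup.closure (cs.simple '' J))
    [Fintype Wf]
    -- the longest element `w₀` of `W_f`, with `ν_f = ℓ(w₀)`
    (w₀ : W) (hw₀ : w₀ ∈ Wf) (hmax : ∀ w ∈ Wf, cs.length w ≤ cs.length w₀) :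
    bar (∑ w : Wf, algebraMap HeckeBase H (T (cs.length (w : W))) * t (w : W)) =
      algebraMap HeckeBase H (T (-(2 * (cs.length w₀ : ℤ)))) *
        (∑ w : Wf, algebraMap HeckeBase H (T (cs.length (w : W))) * t (w : W)) := by
  classical
  subst hWf
  set Q : ℤ → H := fun n => algebraMap HeckeBase H (T n) with hQdef
  set ρ : H := ∑ w : Subgroup.closure (cs.simple '' J),
    algebraMap HeckeBase H (T (cs.length (w : W))) * t (w : W) with hρ
  have hρ' : ρ = ∑ w : Subgroup.closure (cs.simple '' J), Q (cs.length (w : W)) * t (w : W) := hρ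
  have hQmul : ∀ a b : ℤ, Q a * Q b = Q (a + b) := fun a b => HeckeStmtAux.Qmul a b
  have hQone : Q 0 = 1 := HeckeStmtAux.Qzero
  have hQcomm : ∀ (a : ℤ) (x : H), Q a * x = x * Q a := fun a x => Algebra.commutes _ _
  -- the eigenvector property for simple reflections in J
  have h_eig : ∀ i ∈ J, ρ * t (cs.simple i) = Q 1 * ρ := by
    intro i hiJ
    have hsK : cs.simple i ∈ Subgroup.closure (cs.simple '' J) := Subgroup.subset_closure ⟨i, hiJ, rfl⟩
    set si' : Subgroup.closure (cs.simple '' J) := ⟨cs.simple i, hsK⟩ with hsi'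
    set P : Subgroup.closure (cs.simple '' J) → Prop := fun w => cs.length ((w : W) * cs.simple i) = cs.length (w : W) + 1
      with hP
    have hsival : (si' : W) = cs.simple i := rfl
    have hplain : ∀ v : W, v * cs.simple i * cs.simple i = v :=
      fun v => cs.simple_mul_simple_cancel_right i
    have hσσ : ∀ w : Subgroup.closure (cs.simple '' J), w * si' * si' = w := fun w => Subtype.ext (hplain (w : W))
    have hPσ : ∀ w : Subgroup.closure (cs.simple '' J), P w → ¬ P (w * si') := by
      intro w hw hcon
      simp only [hP] at hw hcon
      simp only [MulMemClass.coe_mul, hsival, hplain] at hcon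
      omega
    have hσP : ∀ w : Subgroup.closure (cs.simple '' J), ¬ P w → P (w * si') := by
      intro w hw
      simp only [hP] at hw ⊢
      simp only [MulMemClass.coe_mul, hsival, hplain]
      rcases cs.length_mul_simple (w : W) i with h | h
      · exact absurd h hw
      · omega
    set F : Subgroup.closure (cs.simple '' J) → H := fun w => (Q (cs.length (w : W)) * t (w : W)) * t (cs.simple i) with hF
    set G : Subgroup.closure (cs.simple '' J) → H := fun w => Q 1 * (Q (cs.length (w : W)) * t (w : W)) with hG
    have hgoal1 : ρ * t (cs.simple i) = ∑ w : Subgroup.closure (cs.simple '' J), F w := by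
      rw [hρ', Finset.sum_mul]
    have hgoal2 : Q 1 * ρ = ∑ w : Subgroup.closure (cs.simple '' J), G w := by
      rw [hρ', Finset.mul_sum]
    rw [hgoal1, hgoal2]
    rw [← Finset.sum_filter_add_sum_filter_not Finset.univ P F,
        ← Finset.sum_filter_add_sum_filter_not Finset.univ P G]
    have hbijF : ∑ w ∈ Finset.univ.filter (fun w => ¬ P w), F w
        = ∑ w ∈ Finset.univ.filter P, F (w * si') := by
      refine Finset.sum_nbij' (fun w => w * si') (fun w => w * si') ?_ ?_ ?_ ?_ ?_
      · intro a ha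
        simp only [Finset.mem_filter, Finset.mem_univ, true_and] at ha ⊢
        exact hσP a ha
      · intro a ha
        simp only [Finset.mem_filter, Finset.mem_univ, true_and] at ha ⊢
        exact hPσ a ha
      · intro a _; exact hσσ a
      · intro a _; exact hσσ a
      · intro a _
        rw [hσσ a]
    have hbijG : ∑ w ∈ Finset.univ.filter (fun w => ¬ P w), G w
        = ∑ w ∈ Finset.univ.filter P, G (w * si') := by
      refine Finset.sum_nbij' (fun w => w * si') (fun w => w * si') ?_ ?_ ?_ ?_ ?_
      · intro a ha
        simp only [Finset.mem_filter, Finset.mem_univ, true_and] at ha ⊢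
        exact hσP a ha
      · intro a ha
        simp only [Finset.mem_filter, Finset.mem_univ, true_and] at ha ⊢
        exact hPσ a ha
      · intro a _; exact hσσ a
      · intro a _; exact hσσ a
      · intro a _
        rw [hσσ a]
    rw [hbijF, hbijG, ← Finset.sum_add_distrib, ← Finset.sum_add_distrib]
    refine Finset.sum_congr rfl ?_
    intro w hw
    have hPw : cs.length ((w : W) * cs.simple i) = cs.length (w : W) + 1 := by
      simp only [Finset.mem_filter, Finset.mem_univ, true_and, hP] at hw
      exact hw
    have hpe := HeckeStmtAux.pair_eq cs t hlen hquad i (w : W) hPw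
    simp only [hF, hG, MulMemClass.coe_mul, hsival]
    exact hpe
  -- eigenvector property for all elements of K
  have h_eig_all : ∀ (n : ℕ) (v : W), v ∈ Subgroup.closure (cs.simple '' J) → cs.length v = n →
      ρ * t v = Q (cs.length v) * ρ := by
    intro n
    induction n using Nat.strong_induction_on with
    | _ n ih =>
      intro v hv hlv
      rcases eq_or_ne v 1 with rfl | hne
      · rw [ht1, mul_one, cs.length_one]
        norm_num [hQone]
      · obtain ⟨v', i, hiJ, hv', hdec, hlv'⟩ := HeckeStmtAux.exists_decomp cs J hv hne
        have htv : t v' * t (cs.simple i) = t v := by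
          rw [hdec]
          refine hlen v' (cs.simple i) ?_
          rw [cs.length_simple, ← hdec]
          omega
        have hIH : ρ * t v' = Q (cs.length v') * ρ := ih (cs.length v') (by omega) v' hv' rfl
        calc ρ * t v = ρ * (t v' * t (cs.simple i)) := by rw [htv]
          _ = (ρ * t v') * t (cs.simple i) := by rw [mul_assoc]
          _ = Q (cs.length v') * (ρ * t (cs.simple i)) := by rw [hIH, mul_assoc]
          _ = Q (cs.length v') * (Q 1 * ρ) := by rw [h_eig i hiJ]
          _ = Q ((cs.length v' : ℤ) + 1) * ρ := by rw [← mul_assoc, hQmul]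
          _ = Q (cs.length v) * ρ := by
              have : ((cs.length v : ℕ) : ℤ) = (cs.length v' : ℤ) + 1 := by
                omega
              rw [this]
  -- the complement property
  have hcompl : ∀ v : W, v ∈ Subgroup.closure (cs.simple '' J) → cs.length v + cs.length (v⁻¹ * w₀) = cs.length w₀ :=
    fun v hv => HeckeStmtAux.length_complement cs J hw₀ hmax (cs.length v) v hv rfl
  -- inverse of t w₀
  set z : H := bar (t w₀⁻¹) with hz
  have hz1 : t w₀ * z = 1 := by
    have := (hbart w₀⁻¹).2
    rwa [inv_inv] at this
  have hz2 : z * t w₀ = 1 := by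
    have := (hbart w₀⁻¹).1
    rwa [inv_inv] at this
  -- bar of t w for w in K
  have hbar_t : ∀ w : W, w ∈ Subgroup.closure (cs.simple '' J) → bar (t w) = t (w * w₀) * z := by
    intro w hwK
    have h1 : cs.length w⁻¹ + cs.length (w * w₀) = cs.length w₀ := by
      have := hcompl w⁻¹ (inv_mem hwK)
      rwa [inv_inv] at this
    have h2 : t w⁻¹ * t (w * w₀) = t w₀ := by
      have h3 : cs.length (w⁻¹ * (w * w₀)) = cs.length w⁻¹ + cs.length (w * w₀) := by
        rw [← mul_assoc, inv_mul_cancel, one_mul]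
        omega
      have := hlen w⁻¹ (w * w₀) h3
      rwa [← mul_assoc, inv_mul_cancel, one_mul] at this
    calc bar (t w) = bar (t w) * (t w⁻¹ * (t (w * w₀) * z)) := by
          rw [← mul_assoc (t w⁻¹), h2, hz1, mul_one]
      _ = (bar (t w) * t w⁻¹) * (t (w * w₀) * z) := by rw [mul_assoc]
      _ = t (w * w₀) * z := by rw [(hbart w).1, one_mul]
  -- reindexing equivalence
  set w₀' : Subgroup.closure (cs.simple '' J) := ⟨w₀, hw₀⟩ with hw₀'
  have he : ∀ w : Subgroup.closure (cs.simple '' J), ((w * w₀') : W) = (w : W) * w₀ := fun w => rfl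
  have hlen_e : ∀ w : Subgroup.closure (cs.simple '' J), (cs.length ((w : W) * w₀) : ℤ)
      = (cs.length w₀ : ℤ) - cs.length (w : W) := by
    intro w
    have h1 := hcompl (w : W)⁻¹ (inv_mem w.2)
    rw [inv_inv, cs.length_inv] at h1
    omega
  -- main computation
  have hstep1 : bar ρ = ∑ w : Subgroup.closure (cs.simple '' J), Q (-(cs.length (w : W) : ℤ)) * (t ((w : W) * w₀) * z) := by
    rw [hρ', map_sum]
    refine Finset.sum_congr rfl ?_
    intro w _
    rw [map_mul, hbarq, hbar_t (w : W) w.2]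
  have hstep2 : ∑ w : Subgroup.closure (cs.simple '' J), Q (-(cs.length (w : W) : ℤ)) * (t ((w : W) * w₀) * z)
      = ∑ u : Subgroup.closure (cs.simple '' J), (Q (-(cs.length w₀ : ℤ)) * (Q (cs.length (u : W)) * t (u : W))) * z := by
    refine Fintype.sum_equiv (Equiv.mulRight w₀') _ _ ?_
    intro w
    have hcoee : ((Equiv.mulRight w₀' w) : W) = (w : W) * w₀ := rfl
    rw [hcoee]
    rw [← mul_assoc, ← mul_assoc, hQmul]
    congr 2
    rw [hlen_e w]
    ring
  have hstep3 : ∑ u : Subgroup.closure (cs.simple '' J), (Q (-(cs.length w₀ : ℤ)) * (Q (cs.length (u : W)) * t (u : W))) * z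
      = Q (-(cs.length w₀ : ℤ)) * (ρ * z) := by
    calc ∑ u : Subgroup.closure (cs.simple '' J), (Q (-(cs.length w₀ : ℤ)) * (Q (cs.length (u : W)) * t (u : W))) * z
        = ∑ u : Subgroup.closure (cs.simple '' J), Q (-(cs.length w₀ : ℤ)) * ((Q (cs.length (u : W)) * t (u : W)) * z) := by
          refine Finset.sum_congr rfl fun u _ => ?_
          rw [mul_assoc]
      _ = Q (-(cs.length w₀ : ℤ)) * ∑ u : Subgroup.closure (cs.simple '' J), (Q (cs.length (u : W)) * t (u : W)) * z := by
          rw [Finset.mul_sum]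
      _ = Q (-(cs.length w₀ : ℤ)) * ((∑ u : Subgroup.closure (cs.simple '' J), Q (cs.length (u : W)) * t (u : W)) * z) := by
          rw [Finset.sum_mul]
      _ = Q (-(cs.length w₀ : ℤ)) * (ρ * z) := by rw [← hρ']
  have hρz : ρ * z = Q (-(cs.length w₀ : ℤ)) * ρ := by
    have h := h_eig_all (cs.length w₀) w₀ hw₀ rfl
    calc ρ * z = (Q (-(cs.length w₀ : ℤ)) * Q (cs.length w₀)) * (ρ * z) := by
          rw [hQmul]
          norm_num [hQone]
      _ = Q (-(cs.length w₀ : ℤ)) * ((Q (cs.length w₀) * ρ) * z) := by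
          rw [mul_assoc, mul_assoc]
      _ = Q (-(cs.length w₀ : ℤ)) * ((ρ * t w₀) * z) := by rw [← h]
      _ = Q (-(cs.length w₀ : ℤ)) * (ρ * (t w₀ * z)) := by rw [mul_assoc]
      _ = Q (-(cs.length w₀ : ℤ)) * ρ := by rw [hz1, mul_one]
  have hfinal : bar ρ = Q (-(2 * (cs.length w₀ : ℤ))) * ρ := by
    rw [hstep1, hstep2, hstep3, hρz, ← mul_assoc, hQmul]
    congr 2
    ring
  exact hfinal

end
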